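/- Let n ≥ 1, L = 4n+3, and let E(φ) = E_{2n+2}(φ) + E_{2n+1}(φ), where E_N(φ) is the sum of the N smallest values among {−2cos((2πl+φ)/L) : 0 ≤ l ≤ L−1}. Then E attains its minimum over [0, 2π) exactly at φ = π/2 and φ = 3π/2. -/

import Mathlib

open Real

/-- The multiset of single-particle energies `-2 cos((2πl+φ)/L)`, `l = 0, …, L-1`. -/
noncomputable def ringLevels (L : ℕ) (φ : ℝ) : Multiset ℝ :=
  (Finset.range L).val.map (fun l => -2 * Real.cos ((2 * π * l + φ) / L))

/-- Sum of the `N` smallest single-particle energies. -/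
noncomputable def ringEnergy (L N : ℕ) (φ : ℝ) : ℝ :=
  (((ringLevels L φ).sort (· ≤ ·)).take N).sum

lemma ringLevels_eq (L : ℕ) (φ : ℝ) : ringLevels L φ
    = (Finset.range L).val.map (fun l : ℕ => -2 * Real.cos ((2 * π * (l:ℝ) + φ) / L)) := by
  rw [ringLevels]
  simp [Multiset.map_map]

lemma take_sort_sum (s t : Multiset ℝ) (N : ℕ) (hcard : Multiset.card s = N)
    (h : ∀ a ∈ s, ∀ b ∈ t, a ≤ b) :
    (((s + t).sort (· ≤ ·)).take N).sum = s.sum := by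
  have hsorted : List.Pairwise (· ≤ ·) (s.sort (· ≤ ·) ++ t.sort (· ≤ ·)) := by
    rw [List.pairwise_append]
    exact ⟨Multiset.pairwise_sort _ _, Multiset.pairwise_sort _ _,
      fun a ha b hb => h a ((Multiset.mem_sort _).mp ha) b ((Multiset.mem_sort _).mp hb)⟩
  have hperm : (s + t).sort (· ≤ ·) = s.sort (· ≤ ·) ++ t.sort (· ≤ ·) := by
    refine List.Perm.eq_of_pairwise' (Multiset.pairwise_sort _ _) hsorted ?_
    rw [← Multiset.coe_eq_coe, Multiset.sort_eq]
    rw [← Multiset.coe_add, Multiset.sort_eq, Multiset.sort_eq]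
  rw [hperm, List.take_left' (by rw [Multiset.length_sort, hcard]),
    ← Multiset.sum_coe, Multiset.sort_eq]

lemma ringEnergy_eq (L N : ℕ) (φ : ℝ) (S : Finset ℕ) (hS : S ⊆ Finset.range L)
    (hcard : S.card = N)
    (h : ∀ a ∈ S, ∀ b ∈ Finset.range L, b ∉ S →
      -2 * Real.cos ((2 * π * a + φ) / L) ≤ -2 * Real.cos ((2 * π * b + φ) / L)) :
    ringEnergy L N φ = ∑ l ∈ S, -2 * Real.cos ((2 * π * l + φ) / L) := by
  have hsplit : Finset.range L = S.disjUnion ((Finset.range L) \ S) Finset.disjoint_sdiff := by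
    ext a
    simp only [Finset.disjUnion_eq_union, Finset.mem_union, Finset.mem_sdiff, Finset.mem_range]
    constructor
    · intro haL
      by_cases haS : a ∈ S
      · exact Or.inl haS
      · exact Or.inr ⟨haL, haS⟩
    · rintro (haS | ⟨haL, _⟩)
      · exact Finset.mem_range.mp (hS haS)
      · exact haL
  have hlev : ringLevels L φ = S.val.map (fun l : ℕ => -2 * Real.cos ((2 * π * l + φ) / L))
      + ((Finset.range L \ S).val.map (fun l : ℕ => -2 * Real.cos ((2 * π * l + φ) / L))) := by
    conv_lhs => rw [ringLevels_eq, hsplit]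
    simp [Finset.disjUnion, Multiset.map_add]
  rw [ringEnergy, hlev, take_sort_sum _ _ N (by rw [Multiset.card_map]; exact hcard)]
  · rfl
  · intro a ha b hb
    obtain ⟨a', ha', rfl⟩ := Multiset.mem_map.mp ha
    obtain ⟨b', hb', rfl⟩ := Multiset.mem_map.mp hb
    have hb'' := Finset.mem_sdiff.mp hb'
    exact h a' ha' b' hb''.1 hb''.2

lemma cos_anti {u v : ℝ} (hu : 0 ≤ u) (huv : u ≤ v) (hv : v ≤ 2 * π - u) :
    Real.cos v ≤ Real.cos u := by
  rcases le_or_gt v π with h | h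
  · exact Real.cos_le_cos_of_nonneg_of_le_pi hu h huv
  · rw [← Real.cos_two_pi_sub]
    exact Real.cos_le_cos_of_nonneg_of_le_pi hu (by linarith) (by linarith)

lemma key_ineq (Lr : ℝ) (hLr : 0 < Lr) {A B : ℝ} (h0 : 0 ≤ A) (h1 : A ≤ B)
    (h2 : A + B ≤ 2 * π * Lr) : Real.cos (B / Lr) ≤ Real.cos (A / Lr) := by
  apply cos_anti (div_nonneg h0 hLr.le) (by apply div_le_div_of_nonneg_right h1 hLr.le)
  rw [le_sub_iff_add_le, ← add_div, div_le_iff₀ hLr]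
  linarith

lemma cos_flip (Lr : ℝ) (hLr : 0 < Lr) (y : ℝ) :
    Real.cos ((2 * π * Lr - y) / Lr) = Real.cos (y / Lr) := by
  have h : (2 * π * Lr - y) / Lr = 2 * π - y / Lr := by field_simp
  rw [h, Real.cos_two_pi_sub]

lemma order_gen (n p q : ℕ) (φ : ℝ) (hφ0 : 0 ≤ φ) (hφ2 : φ ≤ 2 * π)
    (H1 : 2 * π * ((p : ℝ) + q - 2) + 2 * φ ≤ 2 * π * (4 * (n : ℝ) + 3))
    (H2 : 2 * π * ((4 * (n : ℝ) + 3) - q) ≤ 2 * π * p + 2 * φ) :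
    ∀ a ∈ Finset.range p ∪ Finset.Ico q (4 * n + 3), ∀ b ∈ Finset.range (4 * n + 3),
      b ∉ Finset.range p ∪ Finset.Ico q (4 * n + 3) →
      -2 * Real.cos ((2 * π * (a : ℝ) + φ) / ((4 * n + 3 : ℕ) : ℝ))
        ≤ -2 * Real.cos ((2 * π * (b : ℝ) + φ) / ((4 * n + 3 : ℕ) : ℝ)) := by
  intro a ha b hb hbn
  simp only [Finset.mem_union, Finset.mem_range, Finset.mem_Ico, not_or, not_and, not_lt] at ha hb hbn
  have hπ := Real.pi_pos
  have hb1 : p ≤ b := by omega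
  have hb2 : b + 1 ≤ q := by omega
  have hLr : (0 : ℝ) < ((4 * n + 3 : ℕ) : ℝ) := by positivity
  have hLcast : ((4 * n + 3 : ℕ) : ℝ) = 4 * (n : ℝ) + 3 := by push_cast; ring
  have hbR1 : (p : ℝ) ≤ b := by exact_mod_cast hb1
  have hbR2 : (b : ℝ) + 1 ≤ q := by exact_mod_cast hb2
  have key : Real.cos ((2 * π * (b : ℝ) + φ) / ((4 * n + 3 : ℕ) : ℝ))
      ≤ Real.cos ((2 * π * (a : ℝ) + φ) / ((4 * n + 3 : ℕ) : ℝ)) := by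
    rcases ha with ha | ha
    · have haR : (a : ℝ) + 1 ≤ p := by exact_mod_cast ha
      apply key_ineq _ hLr (by positivity)
        (by nlinarith)
        (by rw [hLcast]; nlinarith)
    · have haR1 : (q : ℝ) ≤ a := by exact_mod_cast ha.1
      have haR2 : (a : ℝ) + 1 ≤ 4 * n + 3 := by exact_mod_cast ha.2
      have hflip : Real.cos ((2 * π * (a : ℝ) + φ) / ((4 * n + 3 : ℕ) : ℝ))
          = Real.cos ((2 * π * (((4 * n + 3 : ℕ) : ℝ) - a) - φ) / ((4 * n + 3 : ℕ) : ℝ)) := by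
        rw [← cos_flip _ hLr (2 * π * (((4 * n + 3 : ℕ) : ℝ) - a) - φ)]
        congr 1
        ring
      rw [hflip]
      apply key_ineq _ hLr
        (by rw [hLcast]; nlinarith)
        (by rw [hLcast]; nlinarith)
        (by rw [hLcast]; nlinarith)
  linarith

lemma sum_cos_arith (a θ : ℝ) (m : ℕ) :
    2 * Real.sin (θ / 2) * ∑ j ∈ Finset.range m, Real.cos (a + j * θ)
      = Real.sin (a + m * θ - θ / 2) - Real.sin (a - θ / 2) := by
  induction m with
  | zero => simp
  | succ k ih =>
    rw [Finset.sum_range_succ, mul_add, ih]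
    have key : Real.sin (a + (k + 1 : ℕ) * θ - θ / 2) - Real.sin (a + k * θ - θ / 2)
        = 2 * Real.sin (θ / 2) * Real.cos (a + k * θ) := by
      rw [Real.sin_sub_sin]
      push_cast
      ring_nf
    push_cast at key ⊢
    linarith

lemma block (Lr : ℝ) (hLr : 0 < Lr) (φ cr : ℝ) (m : ℕ) :
    2 * Real.sin (π / Lr) * ∑ j ∈ Finset.range m, (-2 * Real.cos ((2 * π * (cr + j) + φ) / Lr))
      = -2 * (Real.sin ((2 * π * cr + φ + 2 * π * m - π) / Lr)
          - Real.sin ((2 * π * cr + φ - π) / Lr)) := by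
  have hsum : ∑ j ∈ Finset.range m, (-2 * Real.cos ((2 * π * (cr + j) + φ) / Lr))
      = -2 * ∑ j ∈ Finset.range m, Real.cos ((2 * π * cr + φ) / Lr + j * (2 * π / Lr)) := by
    rw [Finset.mul_sum]
    apply Finset.sum_congr rfl
    intro j _
    congr 1
    field_simp
    ring
  rw [hsum]
  have := sum_cos_arith ((2 * π * cr + φ) / Lr) (2 * π / Lr) m
  have e1 : (2 * π * cr + φ) / Lr + m * (2 * π / Lr) - (2 * π / Lr) / 2
      = (2 * π * cr + φ + 2 * π * m - π) / Lr := by field_simp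
  have e2 : (2 * π * cr + φ) / Lr - (2 * π / Lr) / 2 = (2 * π * cr + φ - π) / Lr := by
    field_simp
  have e3 : (2 * π / Lr) / 2 = π / Lr := by ring
  rw [e1, e2, e3] at this
  linarith [this]

lemma Ecomp (n p q : ℕ) (φ : ℝ) (hpq : p ≤ q) (hq : q ≤ 4 * n + 3) :
    2 * Real.sin (π / ((4 * n + 3 : ℕ) : ℝ)) * ∑ l ∈ Finset.range p ∪ Finset.Ico q (4 * n + 3),
        (-2 * Real.cos ((2 * π * (l : ℝ) + φ) / ((4 * n + 3 : ℕ) : ℝ)))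
    = -2 * ((Real.sin ((φ + 2 * π * p - π) / ((4 * n + 3 : ℕ) : ℝ))
          - Real.sin ((φ - π) / ((4 * n + 3 : ℕ) : ℝ)))
        + (Real.sin ((2 * π * q + φ + 2 * π * ((4 * (n:ℝ) + 3) - q) - π) / ((4 * n + 3 : ℕ) : ℝ))
          - Real.sin ((2 * π * q + φ - π) / ((4 * n + 3 : ℕ) : ℝ)))) := by
  have hLr : (0 : ℝ) < ((4 * n + 3 : ℕ) : ℝ) := by positivity
  have hdisj : Disjoint (Finset.range p) (Finset.Ico q (4 * n + 3)) := by
    rw [Finset.disjoint_left]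
    intro a ha ha'
    simp only [Finset.mem_range, Finset.mem_Ico] at ha ha'
    omega
  rw [Finset.sum_union hdisj, mul_add]
  have h1 : ∑ l ∈ Finset.range p, (-2 * Real.cos ((2 * π * (l : ℝ) + φ) / ((4 * n + 3 : ℕ) : ℝ)))
      = ∑ j ∈ Finset.range p, (-2 * Real.cos ((2 * π * ((0 : ℝ) + (j : ℝ)) + φ) / ((4 * n + 3 : ℕ) : ℝ))) := by
    apply Finset.sum_congr rfl
    intro j _
    norm_num
  have h2 : ∑ l ∈ Finset.Ico q (4 * n + 3),
        (-2 * Real.cos ((2 * π * (l : ℝ) + φ) / ((4 * n + 3 : ℕ) : ℝ)))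
      = ∑ j ∈ Finset.range (4 * n + 3 - q),
        (-2 * Real.cos ((2 * π * ((q : ℝ) + (j : ℝ)) + φ) / ((4 * n + 3 : ℕ) : ℝ))) := by
    rw [Finset.sum_Ico_eq_sum_range]
    apply Finset.sum_congr rfl
    intro j _
    push_cast
    ring_nf
  rw [h1, h2, block _ hLr φ 0 p, block _ hLr φ q (4 * n + 3 - q)]
  have hcast : ((4 * n + 3 - q : ℕ) : ℝ) = (4 * (n : ℝ) + 3) - q := by
    push_cast [hq]
    ring
  rw [hcast]
  ring_nf

lemma subsetS (n p q : ℕ) (hp : p ≤ 4*n+3) :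
    Finset.range p ∪ Finset.Ico q (4*n+3) ⊆ Finset.range (4*n+3) := by
  apply Finset.union_subset
  · exact Finset.range_subset_range.mpr hp
  · intro a ha
    simp only [Finset.mem_Ico] at ha
    exact Finset.mem_range.mpr ha.2

lemma cardS (n p q : ℕ) (hpq : p ≤ q) (hq : q ≤ 4*n+3) :
    (Finset.range p ∪ Finset.Ico q (4*n+3)).card = p + (4*n+3-q) := by
  rw [Finset.card_union_of_disjoint, Finset.card_range, Nat.card_Ico]
  rw [Finset.disjoint_left]
  intro a ha ha'
  simp only [Finset.mem_range, Finset.mem_Ico] at ha ha'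
  omega

lemma Eval1 (n : ℕ) (φ : ℝ) (h0 : 0 ≤ φ) (h1 : φ ≤ π) :
    ringEnergy (4*n+3) (2*n+2) φ + ringEnergy (4*n+3) (2*n+1) φ
      = -(2 * Real.cos (π / (2*(4*(n:ℝ)+3))) / Real.sin (π / (2*(4*(n:ℝ)+3))))
          * Real.cos ((φ - π/2) / (4*(n:ℝ)+3)) := by
  have hπ := Real.pi_pos
  have hφ2 : φ ≤ 2*π := by linarith
  have hS2 := ringEnergy_eq (4*n+3) (2*n+2) φ (Finset.range (n+1) ∪ Finset.Ico (3*n+2) (4*n+3))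
    (subsetS n (n+1) (3*n+2) (by omega)) (by rw [cardS n (n+1) (3*n+2) (by omega) (by omega)]; omega)
    (order_gen n (n+1) (3*n+2) φ h0 hφ2 (by push_cast; nlinarith) (by push_cast; nlinarith))
  have hS1 := ringEnergy_eq (4*n+3) (2*n+1) φ (Finset.range (n+1) ∪ Finset.Ico (3*n+3) (4*n+3))
    (subsetS n (n+1) (3*n+3) (by omega)) (by rw [cardS n (n+1) (3*n+3) (by omega) (by omega)]; omega)
    (order_gen n (n+1) (3*n+3) φ h0 hφ2 (by push_cast; nlinarith) (by push_cast; nlinarith))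
  rw [hS2, hS1]
  have hTpos : (0:ℝ) < ((4 * n + 3 : ℕ) : ℝ) := by positivity
  have hT1 : (1:ℝ) < ((4 * n + 3 : ℕ) : ℝ) := by
    have : (3:ℝ) ≤ ((4 * n + 3 : ℕ) : ℝ) := by exact_mod_cast Nat.le_add_left 3 (4*n)
    linarith
  have hne : 2 * Real.sin (π / ((4 * n + 3 : ℕ) : ℝ)) ≠ 0 := by
    have h1' : 0 < π / ((4 * n + 3 : ℕ) : ℝ) := by positivity
    have h2' : π / ((4 * n + 3 : ℕ) : ℝ) < π := by
      rw [div_lt_iff₀ hTpos]; nlinarith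
    have := Real.sin_pos_of_pos_of_lt_pi h1' h2'
    positivity
  apply mul_left_cancel₀ hne
  rw [mul_add, Ecomp n (n+1) (3*n+2) φ (by omega) (by omega),
    Ecomp n (n+1) (3*n+3) φ (by omega) (by omega)]
  push_cast
  have hT : (4*(n:ℝ)+3) ≠ 0 := by positivity
  have hA1 : (φ + 2 * π * ((n:ℝ) + 1) - π) / (4 * (n:ℝ) + 3)
      = (φ - π/2) / (4*(n:ℝ)+3) + π/2 := by field_simp; ring
  have hA2 : (φ - π) / (4 * (n:ℝ) + 3)
      = (φ - π/2) / (4*(n:ℝ)+3) - π/(2*(4*(n:ℝ)+3)) := by field_simp; ring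
  have hA3 : (2 * π * (3 * (n:ℝ) + 2) + φ + 2 * π * (4 * (n:ℝ) + 3 - (3 * (n:ℝ) + 2)) - π) / (4 * (n:ℝ) + 3)
      = ((φ - π/2) / (4*(n:ℝ)+3) - π/(2*(4*(n:ℝ)+3))) + 2*π := by field_simp; ring
  have hA4 : (2 * π * (3 * (n:ℝ) + 2) + φ - π) / (4 * (n:ℝ) + 3)
      = ((φ - π/2) / (4*(n:ℝ)+3) - 2*(π/(2*(4*(n:ℝ)+3))) + π/2) + π := by field_simp; ring
  have hA5 : (2 * π * (3 * (n:ℝ) + 3) + φ + 2 * π * (4 * (n:ℝ) + 3 - (3 * (n:ℝ) + 3)) - π) / (4 * (n:ℝ) + 3)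
      = ((φ - π/2) / (4*(n:ℝ)+3) - π/(2*(4*(n:ℝ)+3))) + 2*π := by field_simp; ring
  have hA6 : (2 * π * (3 * (n:ℝ) + 3) + φ - π) / (4 * (n:ℝ) + 3)
      = ((φ - π/2) / (4*(n:ℝ)+3) + 2*(π/(2*(4*(n:ℝ)+3))) + π/2) + π := by field_simp; ring
  have hA7 : π / (4*(n:ℝ)+3) = 2*(π/(2*(4*(n:ℝ)+3))) := by field_simp
  rw [hA1, hA2, hA3, hA4, hA5, hA6, hA7, Real.sin_add_pi_div_two, Real.sin_add_two_pi,
    Real.sin_add_pi, Real.sin_add_pi, Real.sin_add_pi_div_two, Real.sin_add_pi_div_two,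
    Real.sin_two_mul, Real.cos_sub, Real.cos_add, Real.cos_two_mul]
  have hsinS : Real.sin (π / (2*(4*(n:ℝ)+3))) ≠ 0 := by
    apply ne_of_gt
    apply Real.sin_pos_of_pos_of_lt_pi
    · positivity
    · rw [div_lt_iff₀ (by positivity)]
      nlinarith [Real.pi_pos, (Nat.cast_nonneg n : (0:ℝ) ≤ n)]
  have key : ∀ si co cy : ℝ, si ≠ 0 →
      2*(2*si*co) * (-(2*co/si)*cy) = -8*co^2*cy := by
    intro si co cy h
    field_simp
    ring
  rw [key _ _ _ hsinS]
  ring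

lemma Eval2 (n : ℕ) (φ : ℝ) (h0 : π ≤ φ) (h1 : φ ≤ 2*π) :
    ringEnergy (4*n+3) (2*n+2) φ + ringEnergy (4*n+3) (2*n+1) φ
      = -(2 * Real.cos (π / (2*(4*(n:ℝ)+3))) / Real.sin (π / (2*(4*(n:ℝ)+3))))
          * Real.cos ((φ - 3*π/2) / (4*(n:ℝ)+3)) := by
  have hπ := Real.pi_pos
  have hφ0 : 0 ≤ φ := by linarith
  have hS2 := ringEnergy_eq (4*n+3) (2*n+2) φ (Finset.range (n+1) ∪ Finset.Ico (3*n+2) (4*n+3))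
    (subsetS n (n+1) (3*n+2) (by omega)) (by rw [cardS n (n+1) (3*n+2) (by omega) (by omega)]; omega)
    (order_gen n (n+1) (3*n+2) φ hφ0 h1 (by push_cast; nlinarith) (by push_cast; nlinarith))
  have hS1 := ringEnergy_eq (4*n+3) (2*n+1) φ (Finset.range n ∪ Finset.Ico (3*n+2) (4*n+3))
    (subsetS n n (3*n+2) (by omega)) (by rw [cardS n n (3*n+2) (by omega) (by omega)]; omega)
    (order_gen n n (3*n+2) φ hφ0 h1 (by push_cast; nlinarith) (by push_cast; nlinarith))
  rw [hS2, hS1]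
  have hTpos : (0:ℝ) < ((4 * n + 3 : ℕ) : ℝ) := by positivity
  have hT1 : (1:ℝ) < ((4 * n + 3 : ℕ) : ℝ) := by
    have : (3:ℝ) ≤ ((4 * n + 3 : ℕ) : ℝ) := by exact_mod_cast Nat.le_add_left 3 (4*n)
    linarith
  have hne : 2 * Real.sin (π / ((4 * n + 3 : ℕ) : ℝ)) ≠ 0 := by
    have h1' : 0 < π / ((4 * n + 3 : ℕ) : ℝ) := by positivity
    have h2' : π / ((4 * n + 3 : ℕ) : ℝ) < π := by
      rw [div_lt_iff₀ hTpos]; nlinarith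
    have := Real.sin_pos_of_pos_of_lt_pi h1' h2'
    positivity
  apply mul_left_cancel₀ hne
  rw [mul_add, Ecomp n (n+1) (3*n+2) φ (by omega) (by omega),
    Ecomp n n (3*n+2) φ (by omega) (by omega)]
  push_cast
  have hT : (4*(n:ℝ)+3) ≠ 0 := by positivity
  have hB1 : (φ + 2 * π * ((n:ℝ) + 1) - π) / (4 * (n:ℝ) + 3)
      = ((φ - 3*π/2) / (4*(n:ℝ)+3) + 2*(π/(2*(4*(n:ℝ)+3)))) + π/2 := by field_simp; ring
  have hB2 : (φ - π) / (4 * (n:ℝ) + 3)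
      = (φ - 3*π/2) / (4*(n:ℝ)+3) + π/(2*(4*(n:ℝ)+3)) := by field_simp; ring
  have hB3 : (2 * π * (3 * (n:ℝ) + 2) + φ + 2 * π * (4 * (n:ℝ) + 3 - (3 * (n:ℝ) + 2)) - π) / (4 * (n:ℝ) + 3)
      = ((φ - 3*π/2) / (4*(n:ℝ)+3) + π/(2*(4*(n:ℝ)+3))) + 2*π := by field_simp; ring
  have hB4 : (2 * π * (3 * (n:ℝ) + 2) + φ - π) / (4 * (n:ℝ) + 3)
      = ((φ - 3*π/2) / (4*(n:ℝ)+3) + π/2) + π := by field_simp; ring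
  have hB5 : (φ + 2 * π * (n:ℝ) - π) / (4 * (n:ℝ) + 3)
      = ((φ - 3*π/2) / (4*(n:ℝ)+3) - 2*(π/(2*(4*(n:ℝ)+3)))) + π/2 := by field_simp; ring
  have hB7 : π / (4*(n:ℝ)+3) = 2*(π/(2*(4*(n:ℝ)+3))) := by field_simp
  rw [hB1, hB2, hB3, hB4, hB5, hB7, Real.sin_add_pi_div_two, Real.sin_add_two_pi,
    Real.sin_add_pi, Real.sin_add_pi_div_two, Real.sin_add_pi_div_two,
    Real.sin_two_mul, Real.cos_sub, Real.cos_add, Real.cos_two_mul]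
  have hsinS : Real.sin (π / (2*(4*(n:ℝ)+3))) ≠ 0 := by
    apply ne_of_gt
    apply Real.sin_pos_of_pos_of_lt_pi
    · positivity
    · rw [div_lt_iff₀ (by positivity)]
      nlinarith [Real.pi_pos, (Nat.cast_nonneg n : (0:ℝ) ≤ n)]
  have key : ∀ si co cy : ℝ, si ≠ 0 →
      2*(2*si*co) * (-(2*co/si)*cy) = -8*co^2*cy := by
    intro si co cy h
    field_simp
    ring
  rw [key _ _ _ hsinS]
  ring

set_option maxHeartbeats 1600000 in
theorem stmt_16 (n : ℕ) (hn : 1 ≤ n) (L : ℕ) (hL : L = 4 * n + 3)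
    (E : ℝ → ℝ) (hE : ∀ φ, E φ = ringEnergy L (2 * n + 2) φ + ringEnergy L (2 * n + 1) φ) :
    {φ ∈ Set.Ico (0 : ℝ) (2 * π) | ∀ ψ ∈ Set.Ico (0 : ℝ) (2 * π), E φ ≤ E ψ}
      = {π / 2, 3 * π / 2} := by
  subst hL
  have hπ := Real.pi_pos
  have hn0 : (0:ℝ) ≤ n := Nat.cast_nonneg n
  have hTpos : (0:ℝ) < 4*(n:ℝ)+3 := by linarith
  have hs1 : 0 < π / (2*(4*(n:ℝ)+3)) := by positivity
  have hs2 : π / (2*(4*(n:ℝ)+3)) < π/2 := by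
    rw [div_lt_div_iff₀ (by linarith) (by norm_num)]
    nlinarith
  have hsinpos : 0 < Real.sin (π / (2*(4*(n:ℝ)+3))) :=
    Real.sin_pos_of_pos_of_lt_pi hs1 (by linarith)
  have hcospos : 0 < Real.cos (π / (2*(4*(n:ℝ)+3))) :=
    Real.cos_pos_of_mem_Ioo ⟨by linarith, hs2⟩
  have hCpos : 0 < 2 * Real.cos (π / (2*(4*(n:ℝ)+3))) / Real.sin (π / (2*(4*(n:ℝ)+3))) := by
    positivity
  have hround : ∀ ψ, 0 ≤ ψ → ψ ≤ 2*π →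
      -(2 * Real.cos (π / (2*(4*(n:ℝ)+3))) / Real.sin (π / (2*(4*(n:ℝ)+3)))) ≤ E ψ := by
    intro ψ hψ0 hψ2
    rcases le_or_gt ψ π with h | h
    · rw [hE, Eval1 n ψ hψ0 h]
      nlinarith [Real.cos_le_one ((ψ - π/2) / (4*(n:ℝ)+3))]
    · rw [hE, Eval2 n ψ h.le hψ2]
      nlinarith [Real.cos_le_one ((ψ - 3*π/2) / (4*(n:ℝ)+3))]
  have hEhalf : E (π/2) = -(2 * Real.cos (π / (2*(4*(n:ℝ)+3))) / Real.sin (π / (2*(4*(n:ℝ)+3)))) := by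
    rw [hE, Eval1 n (π/2) (by positivity) (by linarith),
      show (π/2 - π/2) / (4*(n:ℝ)+3) = 0 by ring, Real.cos_zero]
    ring
  have hE3half : E (3*π/2) = -(2 * Real.cos (π / (2*(4*(n:ℝ)+3))) / Real.sin (π / (2*(4*(n:ℝ)+3)))) := by
    rw [hE, Eval2 n (3*π/2) (by linarith) (by linarith),
      show (3*π/2 - 3*π/2) / (4*(n:ℝ)+3) = 0 by ring, Real.cos_zero]
    ring
  ext φ
  simp only [Set.mem_setOf_eq, Set.mem_Ico, Set.mem_insert_iff, Set.mem_singleton_iff]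
  constructor
  · rintro ⟨⟨h0, h2⟩, hmin⟩
    have hle : E φ ≤ -(2 * Real.cos (π / (2*(4*(n:ℝ)+3))) / Real.sin (π / (2*(4*(n:ℝ)+3)))) := by
      have := hmin (π/2) ⟨by positivity, by linarith⟩
      rwa [hEhalf] at this
    rcases le_or_gt φ π with hc | hc
    · left
      have hEφ : E φ = -(2 * Real.cos (π / (2*(4*(n:ℝ)+3))) / Real.sin (π / (2*(4*(n:ℝ)+3))))
          * Real.cos ((φ - π/2) / (4*(n:ℝ)+3)) := by rw [hE]; exact Eval1 n φ h0 hc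
      have hcos1 : Real.cos ((φ - π/2) / (4*(n:ℝ)+3)) = 1 := by
        have hub := Real.cos_le_one ((φ - π/2) / (4*(n:ℝ)+3))
        nlinarith [hle, hEφ, hCpos]
      have hbound : |(φ - π/2) / (4*(n:ℝ)+3)| < 2*π := by
        rw [abs_div, abs_of_pos hTpos]
        rw [div_lt_iff₀ hTpos]
        have : |φ - π/2| ≤ 2*π := by
          rw [abs_le]; constructor <;> linarith
        nlinarith
      have harg := (Real.cos_eq_one_iff_of_lt_of_lt
        (by linarith [abs_lt.mp hbound]) (by linarith [abs_lt.mp hbound])).mp hcos1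
      have : φ - π/2 = 0 := by
        rcases div_eq_zero_iff.mp harg with h | h
        · exact h
        · exact absurd h (by linarith)
      linarith
    · right
      have hEφ : E φ = -(2 * Real.cos (π / (2*(4*(n:ℝ)+3))) / Real.sin (π / (2*(4*(n:ℝ)+3))))
          * Real.cos ((φ - 3*π/2) / (4*(n:ℝ)+3)) := by rw [hE]; exact Eval2 n φ hc.le (by linarith)
      have hcos1 : Real.cos ((φ - 3*π/2) / (4*(n:ℝ)+3)) = 1 := by
        have hub := Real.cos_le_one ((φ - 3*π/2) / (4*(n:ℝ)+3))
        nlinarith [hle, hEφ, hCpos]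
      have hbound : |(φ - 3*π/2) / (4*(n:ℝ)+3)| < 2*π := by
        rw [abs_div, abs_of_pos hTpos]
        rw [div_lt_iff₀ hTpos]
        have : |φ - 3*π/2| ≤ 2*π := by
          rw [abs_le]; constructor <;> linarith
        nlinarith
      have harg := (Real.cos_eq_one_iff_of_lt_of_lt
        (by linarith [abs_lt.mp hbound]) (by linarith [abs_lt.mp hbound])).mp hcos1
      have : φ - 3*π/2 = 0 := by
        rcases div_eq_zero_iff.mp harg with h | h
        · exact h
        · exact absurd h (by linarith)
      linarith
  · rintro (rfl | rfl)
    · refine ⟨⟨by positivity, by linarith⟩, fun ψ hψ => ?_⟩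
      rw [hEhalf]
      exact hround ψ hψ.1 hψ.2.le
    · refine ⟨⟨by positivity, by linarith⟩, fun ψ hψ => ?_⟩
      rw [hE3half]
      exact hround ψ hψ.1 hψ.2.le
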